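/- arXiv:2104.12206 — 3 statements merged into one kernel-verified Lean document; each statement's English description precedes it below -/
import Mathlib

section
/- Let d > 1 be an integer. There exists a real constant K > 0 (one may take K = d^d / 2^{d(d-1)-1}) such that for every real ε ∈ (0,1), every real r > 1, every monic polynomial p of degree d over ℂ, and every α ∈ ℂ, the following holds: if all roots z₁, …, z_d of p(z) = α lie in the open disk of radius r centered at 0, and each root has distance greater than ε from every critical point of p, then for every pair of distinct indices i < j we have |z_i − z_j| > K·(ε/r)^{d²}. -/
open Polynomial

lemma aux_pow_card_le_prod (s : Multiset ℝ) {ε : ℝ} (hε : 0 ≤ ε)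
    (h : ∀ x ∈ s, ε ≤ x) : ε ^ Multiset.card s ≤ s.prod := by
  induction s using Multiset.induction_on with
  | empty => simp
  | cons a s ih =>
    simp only [Multiset.card_cons, Multiset.prod_cons, pow_succ, mul_comm]
    exact mul_le_mul (h a (Multiset.mem_cons_self a s))
      (ih fun x hx => h x (Multiset.mem_cons_of_mem hx))
      (pow_nonneg hε _) (hε.trans (h a (Multiset.mem_cons_self a s)))

lemma aux_prod_le_pow_card (s : Multiset ℝ) {M : ℝ} (hM : 0 ≤ M)
    (h : ∀ x ∈ s, 0 ≤ x ∧ x ≤ M) : s.prod ≤ M ^ Multiset.card s := by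
  induction s using Multiset.induction_on with
  | empty => simp
  | cons a s ih =>
    simp only [Multiset.card_cons, Multiset.prod_cons, pow_succ, mul_comm (M ^ _) M]
    refine mul_le_mul (h a (Multiset.mem_cons_self a s)).2
      (ih fun x hx => h x (Multiset.mem_cons_of_mem hx)) ?_ hM
    exact Multiset.prod_nonneg fun x hx => (h x (Multiset.mem_cons_of_mem hx)).1

theorem stmt0 (d : ℕ) (hd : 1 < d) :
    ∃ K : ℝ, K = (d : ℝ) ^ d / 2 ^ (d * (d - 1) - 1) ∧ 0 < K ∧
      ∀ (ε r : ℝ), ε ∈ Set.Ioo (0 : ℝ) 1 → 1 < r →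
      ∀ (p : Polynomial ℂ), p.Monic → p.natDegree = d →
      ∀ (α : ℂ) (z : Fin d → ℂ),
        p - Polynomial.C α = ∏ i, (Polynomial.X - Polynomial.C (z i)) →
        (∀ i, ‖z i‖ < r) →
        (∀ i (c : ℂ), (Polynomial.derivative p).eval c = 0 → ε < dist (z i) c) →
        ∀ i j : Fin d, i < j →
          K * (ε / r) ^ (d ^ 2) < ‖z i - z j‖ := by
  have hd0 : (0:ℝ) < d := by exact_mod_cast Nat.lt_of_lt_of_le Nat.zero_lt_one hd.le
  refine ⟨_, rfl, div_pos (pow_pos hd0 _) (pow_pos two_pos _), ?_⟩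
  rintro ε r ⟨hε0, hε1⟩ hr p hp hdeg α z hfact hlt hcrit i j hij
  have hij' : j ≠ i := hij.ne'
  -- the derivative of p equals the derivative of the product
  have hder : derivative p = derivative (∏ k, (X - C (z k))) := by
    rw [← hfact]; simp
  set S : Multiset ℂ := Finset.univ.val.map z with hS
  have hiS : z i ∈ S := Multiset.mem_map_of_mem _ (Finset.mem_univ i)
  have heval : (derivative p).eval (z i)
      = (Multiset.map (fun a => z i - a) (S.erase (z i))).prod := by
    rw [hder, Finset.prod_eq_multiset_prod,
      show (fun k => X - C (z k)) = ((fun a => X - C a) ∘ z) from rfl,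
      ← Multiset.map_map (fun a => X - C a) z,
      eval_multiset_prod_X_sub_C_derivative hiS]
  set T : Multiset (Fin d) := Finset.univ.val.erase i with hT
  have hST : S.erase (z i) = T.map z := by
    have huniv : (Finset.univ : Finset (Fin d)).val = i ::ₘ T :=
      (Multiset.cons_erase (Finset.mem_univ i)).symm
    rw [hS, huniv, Multiset.map_cons, Multiset.erase_cons_head]
  have hjT : j ∈ T := (Multiset.mem_erase_of_ne hij').mpr (Finset.mem_univ j)
  have hTj : T = j ::ₘ T.erase j := (Multiset.cons_erase hjT).symm
  have heval2 : (derivative p).eval (z i)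
      = (z i - z j) * ((T.erase j).map (fun k => z i - z k)).prod := by
    rw [heval, hST, Multiset.map_map]
    nth_rw 1 [hTj]
    rw [Multiset.map_cons, Multiset.prod_cons]
    rfl
  have hcardT : Multiset.card T = d - 1 := by
    rw [hT, Multiset.card_erase_of_mem (Finset.mem_univ i)]
    simp
  have hcardTj : Multiset.card (T.erase j) = d - 2 := by
    rw [Multiset.card_erase_of_mem hjT, hcardT, Nat.pred_eq_sub_one]
    omega
  have h2r : (0:ℝ) < 2 * r := by linarith
  -- upper bound for the product of the remaining factors
  have habs_rest : ((T.erase j).map (fun k => ‖z i - z k‖)).prod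
      ≤ (2 * r) ^ (d - 2) := by
    have := aux_prod_le_pow_card ((T.erase j).map (fun k => ‖z i - z k‖))
      h2r.le ?_
    · rwa [Multiset.card_map, hcardTj] at this
    · rintro x hx
      obtain ⟨k, hk, rfl⟩ := Multiset.mem_map.mp hx
      refine ⟨norm_nonneg _, ?_⟩
      calc ‖z i - z k‖ ≤ ‖z i‖ + ‖z k‖ := by
            simpa using norm_sub_le (z i) (z k)
        _ ≤ 2 * r := by have := hlt i; have := hlt k; linarith
  -- leading coefficient and degree of the derivative
  have hd1 : d - 1 + 1 = d := by omega
  have hcast : ((d - 1 : ℕ) : ℂ) + 1 = (d : ℂ) := by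
    push_cast [Nat.cast_sub (show 1 ≤ d by omega)]
    ring
  have hcoeff : (derivative p).coeff (d - 1) = (d : ℂ) := by
    rw [coeff_derivative, hd1]
    have h1 : p.coeff d = 1 := by
      have := hp.coeff_natDegree
      rwa [hdeg] at this
    rw [h1, one_mul]
    exact hcast
  have hdC : (d : ℂ) ≠ 0 := Nat.cast_ne_zero.mpr (by omega)
  have hdp : derivative p ≠ 0 := by
    intro h
    rw [h, coeff_zero] at hcoeff
    exact hdC hcoeff.symm
  have hdeg' : (derivative p).natDegree = d - 1 := by
    have h0 : 0 < p.natDegree := by omega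
    have := degree_derivative_eq p h0
    rw [hdeg] at this
    exact natDegree_eq_of_degree_eq_some this
  have hlc : (derivative p).leadingCoeff = (d : ℂ) := by
    rw [leadingCoeff, hdeg', hcoeff]
  -- factor the derivative over its roots
  have hsplits : (derivative p).roots.card = (derivative p).natDegree :=
    splits_iff_card_roots.mp (IsAlgClosed.splits _)
  set R : Multiset ℂ := (derivative p).roots with hR
  have hRcard : Multiset.card R = d - 1 := by rw [hR, hsplits, hdeg']
  have hfac : C ((derivative p).leadingCoeff) * (R.map fun a => X - C a).prod = derivative p :=
    C_leadingCoeff_mul_prod_multiset_X_sub_C hsplits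
  have hevalR : (derivative p).eval (z i) = (d : ℂ) * (R.map (fun a => z i - a)).prod := by
    conv_lhs => rw [← hfac]
    rw [hlc, eval_mul, eval_C, eval_multiset_prod, Multiset.map_map]
    simp [Function.comp]
  -- lower bound from the distance to critical points
  have hRlb : ε ^ (d - 1) ≤ (R.map (fun a => ‖z i - a‖)).prod := by
    have := aux_pow_card_le_prod (R.map (fun a => ‖z i - a‖)) hε0.le ?_
    · rwa [Multiset.card_map, hRcard] at this
    · rintro x hx
      obtain ⟨c, hc, rfl⟩ := Multiset.mem_map.mp hx
      have hc0 : (derivative p).eval c = 0 := (mem_roots hdp).mp hc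
      have := hcrit i c hc0
      rw [Complex.dist_eq] at this
      exact this.le
  have habs_eval : ‖(derivative p).eval (z i)‖
      = (d : ℝ) * (R.map (fun a => ‖z i - a‖)).prod := by
    rw [hevalR, norm_mul, Complex.norm_natCast]; congr 1
    exact (map_multiset_prod (normHom : ℂ →*₀ ℝ) _).trans (by rw [Multiset.map_map]; rfl)
  have habs_eval2 : ‖(derivative p).eval (z i)‖
      = ‖z i - z j‖ * ((T.erase j).map (fun k => ‖z i - z k‖)).prod := by
    rw [heval2, norm_mul]; congr 1
    exact (map_multiset_prod (normHom : ℂ →*₀ ℝ) _).trans (by rw [Multiset.map_map]; rfl)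
  set b : ℝ := ‖z i - z j‖ with hb
  have hbnn : 0 ≤ b := norm_nonneg _
  have key : (d : ℝ) * ε ^ (d - 1) ≤ b * (2 * r) ^ (d - 2) := by
    calc (d : ℝ) * ε ^ (d - 1)
        ≤ (d : ℝ) * (R.map (fun a => ‖z i - a‖)).prod :=
          mul_le_mul_of_nonneg_left hRlb hd0.le
      _ = ‖(derivative p).eval (z i)‖ := habs_eval.symm
      _ = b * ((T.erase j).map (fun k => ‖z i - z k‖)).prod := habs_eval2
      _ ≤ b * (2 * r) ^ (d - 2) := mul_le_mul_of_nonneg_left habs_rest hbnn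
  -- final numeric estimate
  obtain ⟨e, rfl⟩ : ∃ e, d = e + 2 := ⟨d - 2, by omega⟩
  have hstep : ((e : ℝ) + 2) * ε ^ (e + 1) / (2 * r) ^ e ≤ b := by
    rw [div_le_iff₀ (pow_pos h2r e)]
    have h1 : e + 2 - 1 = e + 1 := rfl
    have h2 : e + 2 - 2 = e := rfl
    rw [h1, h2] at key
    push_cast at key
    linarith
  have hexp1 : (e + 2) * ((e + 2) - 1) - 1 = e * e + 3 * e + 1 := by
    have h : (e + 2) * ((e + 2) - 1) = e * e + 3 * e + 2 := by
      have h1 : (e + 2) - 1 = e + 1 := rfl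
      rw [h1]; ring
    omega
  have hexp2 : (e + 2) ^ 2 = e * e + 4 * e + 4 := by ring
  rw [hexp1, hexp2]
  push_cast
  refine lt_of_lt_of_le ?_ hstep
  have hrpos : (0:ℝ) < r := by linarith
  rw [div_pow, mul_pow, div_mul_div_comm, div_lt_div_iff₀ (by positivity) (by positivity)]
  have hsplitε : ε ^ (e * e + 4 * e + 4) = ε ^ (e + 1) * ε ^ (e * e + 3 * e + 3) := by
    rw [← pow_add]; congr 1; ring
  have hsplit2 : (2:ℝ) ^ (e * e + 3 * e + 1) = 2 ^ e * 2 ^ (e * e + 2 * e + 1) := by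
    rw [← pow_add]; congr 1; ring
  have hsplitr : r ^ (e * e + 4 * e + 4) = r ^ e * r ^ (e * e + 3 * e + 4) := by
    rw [← pow_add]; congr 1; ring
  have hsplitE : ((e : ℝ) + 2) ^ (e + 2) = ((e : ℝ) + 2) * ((e : ℝ) + 2) ^ (e + 1) := by
    rw [pow_succ]; ring
  rw [hsplitε, hsplit2, hsplitr, hsplitE]
  have hcore : ((e : ℝ) + 2) ^ (e + 1) * ε ^ (e * e + 3 * e + 3)
      < 2 ^ (e * e + 2 * e + 1) * r ^ (e * e + 3 * e + 4) := by
    have h1 : ε ^ (e * e + 3 * e + 3) < 1 := pow_lt_one₀ hε0.le hε1 (by omega)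
    have h2 : ((e : ℝ) + 2) ^ (e + 1) ≤ 2 ^ (e * e + 2 * e + 1) := by
      have hEnat : (e + 2 : ℕ) ≤ 2 ^ (e + 1) := Nat.lt_two_pow_self (n := e + 1)
      have hE : ((e : ℝ) + 2) ≤ 2 ^ (e + 1) := by exact_mod_cast hEnat
      calc ((e : ℝ) + 2) ^ (e + 1) ≤ ((2 : ℝ) ^ (e + 1)) ^ (e + 1) :=
            pow_le_pow_left₀ (by positivity) hE _
        _ = 2 ^ (e * e + 2 * e + 1) := by rw [← pow_mul]; congr 1; ring
    have h3 : (1:ℝ) ≤ r ^ (e * e + 3 * e + 4) := one_le_pow₀ hr.le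
    have hEpos : (0:ℝ) < ((e : ℝ) + 2) ^ (e + 1) := by positivity
    calc ((e : ℝ) + 2) ^ (e + 1) * ε ^ (e * e + 3 * e + 3)
        < ((e : ℝ) + 2) ^ (e + 1) * 1 := by
          exact mul_lt_mul_of_pos_left h1 hEpos
      _ = ((e : ℝ) + 2) ^ (e + 1) := mul_one _
      _ ≤ 2 ^ (e * e + 2 * e + 1) := h2
      _ ≤ 2 ^ (e * e + 2 * e + 1) * r ^ (e * e + 3 * e + 4) := by
          nlinarith [pow_pos (show (0:ℝ) < 2 by norm_num) (e * e + 2 * e + 1)]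
  have hP : (0:ℝ) < ((e : ℝ) + 2) * ε ^ (e + 1) * (2 ^ e * r ^ e) := by positivity
  calc ((e : ℝ) + 2) * ((e : ℝ) + 2) ^ (e + 1) * (ε ^ (e + 1) * ε ^ (e * e + 3 * e + 3))
        * (2 ^ e * r ^ e)
      = (((e : ℝ) + 2) * ε ^ (e + 1) * (2 ^ e * r ^ e))
        * (((e : ℝ) + 2) ^ (e + 1) * ε ^ (e * e + 3 * e + 3)) := by ring
    _ < (((e : ℝ) + 2) * ε ^ (e + 1) * (2 ^ e * r ^ e))
        * (2 ^ (e * e + 2 * e + 1) * r ^ (e * e + 3 * e + 4)) :=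
          mul_lt_mul_of_pos_left hcore hP
    _ = ((e : ℝ) + 2) * ε ^ (e + 1) * (2 ^ e * 2 ^ (e * e + 2 * e + 1)
        * (r ^ e * r ^ (e * e + 3 * e + 4))) := by ring
end

section
/- Let q(z) = (z − z₁)⋯(z − z_d) be a monic polynomial of degree d ≥ 2 over ℂ whose roots all lie in the disk of radius r > 1 about 0, and assume |q'(z_n)| ≥ d·ε^{d−1} for all n, where ε ∈ (0,1). Then for any pair of distinct roots, |z_i − z_j| ≥ d^d ε^{d(d−1)} / (2r)^{d(d−1)−1}. -/
open Polynomial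

theorem stmt2 (d : ℕ) (hd : 2 ≤ d) (r ε : ℝ) (hr : 1 < r) (hε : ε ∈ Set.Ioo (0 : ℝ) 1)
    (z : Fin d → ℂ) (q : Polynomial ℂ)
    (hq : q = ∏ i, (Polynomial.X - Polynomial.C (z i)))
    (hroots : ∀ i, ‖z i‖ < r)
    (hderiv : ∀ n, (d : ℝ) * ε ^ (d - 1) ≤ ‖(Polynomial.derivative q).eval (z n)‖) :
    ∀ i j : Fin d, i ≠ j →
      (d : ℝ) ^ d * ε ^ (d * (d - 1)) / (2 * r) ^ (d * (d - 1) - 1) ≤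
        ‖z i - z j‖ := by
  intro i j hij
  obtain ⟨hε0, hε1⟩ := hε
  have hdpos : (0:ℝ) < d := by positivity
  have A : Fin d → Fin d → ℝ := fun n m => ‖z n - z m‖
  -- derivative at a root
  have hderiv_eval : ∀ n, (derivative q).eval (z n)
      = ∏ m ∈ Finset.univ.erase n, (z n - z m) := by
    intro n
    rw [hq, ← Finset.mul_prod_erase _ _ (Finset.mem_univ n), derivative_mul,
      derivative_X_sub_C, one_mul, eval_add, eval_mul, eval_sub, eval_X, eval_C,
      sub_self, zero_mul, add_zero, eval_prod]
    simp
  have h2r : ∀ n m : Fin d, ‖z n - z m‖ ≤ 2 * r := by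
    intro n m
    calc ‖z n - z m‖ ≤ ‖z n‖ + ‖z m‖ := by
          simpa using norm_sub_le (z n) (z m)
      _ ≤ r + r := add_le_add (hroots n).le (hroots m).le
      _ = 2 * r := by ring
  -- lower bound on the full product
  have hlow : (d:ℝ)^d * ε^(d*(d-1))
      ≤ ∏ n, ∏ m ∈ Finset.univ.erase n, ‖z n - z m‖ := by
    have h1 : ((d:ℝ) * ε^(d-1))^d ≤ ∏ n, ‖(derivative q).eval (z n)‖ := by
      calc ((d:ℝ)*ε^(d-1))^d = ∏ _n : Fin d, ((d:ℝ)*ε^(d-1)) := by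
            simp [Finset.prod_const, Finset.card_univ]
        _ ≤ _ := Finset.prod_le_prod (fun _ _ => by positivity) (fun n _ => hderiv n)
    calc (d:ℝ)^d * ε^(d*(d-1)) = ((d:ℝ)*ε^(d-1))^d := by
          rw [mul_pow, ← pow_mul, Nat.mul_comm d (d-1)]
      _ ≤ ∏ n, ‖(derivative q).eval (z n)‖ := h1
      _ = _ := by
          refine Finset.prod_congr rfl fun n _ => ?_
          rw [hderiv_eval n, norm_prod]
  -- rewrite as product over sigma type
  set S : Finset (Σ _ : Fin d, Fin d) :=
    (Finset.univ : Finset (Fin d)).sigma (fun n => Finset.univ.erase n) with hS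
  have hmem : (⟨i, j⟩ : Σ _ : Fin d, Fin d) ∈ S := by
    simp [hS, Ne.symm hij]
  have hcard : S.card = d * (d - 1) := by
    simp [hS, Finset.card_sigma, Finset.card_erase_of_mem, Finset.card_univ,
      Finset.sum_const, Nat.mul_comm]
  have hprod_eq : (∏ n, ∏ m ∈ Finset.univ.erase n, ‖z n - z m‖)
      = ∏ p ∈ S, ‖z p.1 - z p.2‖ := by
    rw [hS, Finset.prod_sigma]
  have hupper : (∏ p ∈ S, ‖z p.1 - z p.2‖)
      ≤ ‖z i - z j‖ * (2*r)^(d*(d-1)-1) := by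
    rw [← Finset.prod_erase_mul S _ hmem, mul_comm]
    refine mul_le_mul_of_nonneg_left ?_ (norm_nonneg _)
    calc ∏ p ∈ S.erase ⟨i,j⟩, ‖z p.1 - z p.2‖
        ≤ ∏ _p ∈ S.erase ⟨i,j⟩, (2*r) :=
          Finset.prod_le_prod (fun p _ => norm_nonneg _) (fun p _ => h2r p.1 p.2)
      _ = (2*r)^(d*(d-1)-1) := by
          rw [Finset.prod_const, Finset.card_erase_of_mem hmem, hcard]
  rw [div_le_iff₀ (by positivity)]
  calc (d:ℝ)^d * ε^(d*(d-1)) ≤ _ := hlow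
    _ = ∏ p ∈ S, ‖z p.1 - z p.2‖ := hprod_eq
    _ ≤ _ := hupper
end

section
/- Fix an integer d ≥ 2. For all ε ∈ (0,1) and all sufficiently large ρ > 0 the following holds. Let p be a monic polynomial of degree d such that: (i) every ζ ∈ p^{−1}(α) satisfies |ζ| < 2ρ and every critical point c of p satisfies |c| < 2ρ; (ii) max_{|z|<2ρ}|p'(z)| < ρ^d; (iii) dist(ζ, Crit(p)) > ε/ρ^d for every ζ ∈ p^{−1}(α). Then for w₁, w₂ ∈ ℂ with e^{w₁}, e^{w₂} ∈ p^{−1}(α), e^{w₁} ≠ e^{w₂}, and Re w₁, Re w₂ < log(2ρ), we have |w₁ − w₂| > (ε/ρ)^{d⁴}. -/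
open Polynomial

private lemma aux_pow_le_prod (b : ℝ) (hb : 0 ≤ b) :
    ∀ (s : Multiset ℝ), (∀ x ∈ s, b ≤ x) → b ^ Multiset.card s ≤ s.prod := by
  intro s
  induction s using Multiset.induction_on with
  | empty => simp
  | cons a s ih =>
    intro h
    simp only [Multiset.card_cons, Multiset.prod_cons, pow_succ]
    rw [mul_comm]
    exact mul_le_mul (h a (Multiset.mem_cons_self a s))
      (ih fun x hx => h x (Multiset.mem_cons_of_mem hx)) (pow_nonneg hb _)
      (le_trans hb (h a (Multiset.mem_cons_self a s)))

private lemma aux_prod_le_pow (B : ℝ) :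
    ∀ (s : Multiset ℝ), (∀ x ∈ s, 0 ≤ x) → (∀ x ∈ s, x ≤ B) →
      s.prod ≤ B ^ Multiset.card s := by
  intro s
  induction s using Multiset.induction_on with
  | empty => simp
  | cons a s ih =>
    intro h0 h
    have hB : 0 ≤ B := le_trans (h0 a (Multiset.mem_cons_self a s))
      (h a (Multiset.mem_cons_self a s))
    simp only [Multiset.card_cons, Multiset.prod_cons, pow_succ]
    rw [mul_comm (B ^ Multiset.card s) B]
    exact mul_le_mul (h a (Multiset.mem_cons_self a s))
      (ih (fun x hx => h0 x (Multiset.mem_cons_of_mem hx))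
        (fun x hx => h x (Multiset.mem_cons_of_mem hx)))
      (Multiset.prod_nonneg fun x hx => h0 x (Multiset.mem_cons_of_mem hx)) hB

theorem stmt10 (d : ℕ) (hd : 2 ≤ d) (ε : ℝ) (hε : ε ∈ Set.Ioo (0 : ℝ) 1) :
    ∃ ρ₀ : ℝ, ∀ ρ : ℝ, ρ₀ ≤ ρ →
      ∀ (p : Polynomial ℂ) (α : ℂ), p.Monic → p.natDegree = d →
      (∀ ζ : ℂ, p.eval ζ = α → ‖ζ‖ < 2 * ρ) →
      (∀ c : ℂ, (Polynomial.derivative p).eval c = 0 → ‖c‖ < 2 * ρ) →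
      (∀ z : ℂ, ‖z‖ < 2 * ρ →
        ‖(Polynomial.derivative p).eval z‖ < ρ ^ d) →
      (∀ ζ c : ℂ, p.eval ζ = α → (Polynomial.derivative p).eval c = 0 →
        ε / ρ ^ d < dist ζ c) →
      ∀ w₁ w₂ : ℂ, p.eval (Complex.exp w₁) = α → p.eval (Complex.exp w₂) = α →
        Complex.exp w₁ ≠ Complex.exp w₂ →
        w₁.re < Real.log (2 * ρ) → w₂.re < Real.log (2 * ρ) →
        (ε / ρ) ^ (d ^ 4) < ‖w₁ - w₂‖ := by
  obtain ⟨hε0, hε1⟩ := hε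
  obtain ⟨e, rfl⟩ : ∃ e, d = e + 2 := ⟨d - 2, by omega⟩
  refine ⟨(4 : ℝ) ^ (e + 4), fun ρ hρ p α hmon hdeg hroots hcrit hderivb hdist
    w₁ w₂ h1 h2 hne hr1 hr2 => ?_⟩
  have hρ1 : (1 : ℝ) ≤ ρ := le_trans (one_le_pow₀ (by norm_num)) hρ
  have hρ0 : (0 : ℝ) < ρ := lt_of_lt_of_le one_pos hρ1
  set ζ₁ := Complex.exp w₁ with hζ₁
  set ζ₂ := Complex.exp w₂ with hζ₂
  -- lower bound on |p'(ζ₁)|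
  have hp'deg : (derivative p).natDegree = e + 1 := by
    have := degree_derivative_eq p (by omega)
    rw [hdeg] at this
    exact natDegree_eq_of_degree_eq_some (by simpa using this)
  have hp'lead : (derivative p).leadingCoeff = ((e : ℂ) + 2) := by
    rw [leadingCoeff, hp'deg, coeff_derivative]
    have hc : p.coeff (e + 1 + 1) = 1 := by
      have := hmon.coeff_natDegree
      rwa [hdeg] at this
    rw [hc, one_mul]
    push_cast; ring
  have hp'card : Multiset.card (derivative p).roots = e + 1 := by
    rw [← hp'deg]
    exact (splits_iff_card_roots.mp (IsAlgClosed.splits _))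
  have hlow : (ε / ρ ^ (e + 2)) ^ (e + 1) ≤ ‖(derivative p).eval ζ₁‖ := by
    have hfac := C_leadingCoeff_mul_prod_multiset_X_sub_C (p := derivative p)
      (by rw [hp'card, hp'deg])
    have heval : ‖(derivative p).eval ζ₁‖ =
        ‖(e : ℂ) + 2‖ *
          (((derivative p).roots.map fun a => ‖ζ₁ - a‖).prod) := by
      conv_lhs => rw [← hfac]
      rw [eval_mul, eval_C, hp'lead, norm_mul, eval_multiset_prod, Multiset.map_map]
      congr 1
      have hmapeq : Multiset.map (eval ζ₁ ∘ fun a => X - C a) (derivative p).roots =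
          Multiset.map (fun a => ζ₁ - a) (derivative p).roots :=
        Multiset.map_congr rfl (fun a _ => by simp)
      rw [hmapeq]
      exact (Multiset.prod_hom' _ (normHom : ℂ →*₀ ℝ) _).symm
    rw [heval]
    have habs2 : (1 : ℝ) ≤ ‖(e : ℂ) + 2‖ := by
      have h2 : ((e : ℂ) + 2) = ((e + 2 : ℕ) : ℂ) := by push_cast; ring
      rw [h2, Complex.norm_natCast]
      exact_mod_cast Nat.le_add_left 1 (e + 1)
    have hprod : (ε / ρ ^ (e + 2)) ^ (e + 1) ≤
        (((derivative p).roots.map fun a => ‖ζ₁ - a‖).prod) := by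
      have hh := aux_pow_le_prod (ε / ρ ^ (e + 2)) (by positivity)
        (((derivative p).roots.map fun a => ‖ζ₁ - a‖))
        (by
          intro x hx
          obtain ⟨a, ha, rfl⟩ := Multiset.mem_map.mp hx
          have ha0 : (derivative p).eval a = 0 := isRoot_of_mem_roots ha
          have hdd := hdist ζ₁ a h1 ha0
          rw [Complex.dist_eq] at hdd
          exact le_of_lt hdd)
      rwa [Multiset.card_map, hp'card] at hh
    calc (ε / ρ ^ (e + 2)) ^ (e + 1) = 1 * (ε / ρ ^ (e + 2)) ^ (e + 1) := by ring
      _ ≤ ‖(e : ℂ) + 2‖ *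
          (((derivative p).roots.map fun a => ‖ζ₁ - a‖).prod) := by
        apply mul_le_mul habs2 hprod (by positivity)
        exact le_trans zero_le_one habs2
  -- upper bound on |p'(ζ₁)|
  set L := ‖ζ₁ - ζ₂‖ with hLdef
  set q := p - C α with hqdef
  have hqmon : q.Monic := by
    apply hmon.sub_of_left
    apply lt_of_le_of_lt degree_C_le
    rw [degree_eq_natDegree hmon.ne_zero, hdeg]
    exact_mod_cast Nat.succ_pos (e + 1)
  have hq0 : q ≠ 0 := hqmon.ne_zero
  have hqdeg : q.natDegree = e + 2 := by rw [hqdef, natDegree_sub_C, hdeg]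
  have hqcard : Multiset.card q.roots = e + 2 := by
    rw [← hqdeg]
    exact splits_iff_card_roots.mp (IsAlgClosed.splits _)
  have hqroot_eval : ∀ a, a ∈ q.roots → p.eval a = α := by
    intro a ha
    have := isRoot_of_mem_roots ha
    simp only [IsRoot, hqdef, eval_sub, eval_C, sub_eq_zero] at this
    exact this
  have hz1 : ζ₁ ∈ q.roots := by
    rw [mem_roots']
    exact ⟨hq0, by simp [IsRoot, hqdef, h1]⟩
  have hz2 : ζ₂ ∈ q.roots := by
    rw [mem_roots']
    exact ⟨hq0, by simp [IsRoot, hqdef, h2]⟩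
  have hz2' : ζ₂ ∈ q.roots.erase ζ₁ := (Multiset.mem_erase_of_ne (Ne.symm hne)).mpr hz2
  have htcard : Multiset.card ((q.roots.erase ζ₁).erase ζ₂) = e := by
    rw [Multiset.card_erase_of_mem hz2', Multiset.card_erase_of_mem hz1, hqcard]
    rfl
  have hroots_eq : q.roots = ζ₁ ::ₘ ζ₂ ::ₘ ((q.roots.erase ζ₁).erase ζ₂) := by
    conv_lhs => rw [← Multiset.cons_erase hz1, ← Multiset.cons_erase hz2']
  have hqfac : q = (X - C ζ₁) *
      ((X - C ζ₂) * (((q.roots.erase ζ₁).erase ζ₂).map fun a => X - C a).prod) := by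
    conv_lhs => rw [← prod_multiset_X_sub_C_of_monic_of_roots_card_eq hqmon (hqcard.trans hqdeg.symm),
      hroots_eq]
    simp [Multiset.map_cons, Multiset.prod_cons]
  have hderiv_eq : (derivative p).eval ζ₁ =
      (ζ₁ - ζ₂) * (((q.roots.erase ζ₁).erase ζ₂).map fun a => (ζ₁ - a)).prod := by
    have hdq : derivative q = derivative p := by
      rw [hqdef, derivative_sub, derivative_C, sub_zero]
    conv_lhs => rw [← hdq, hqfac]
    rw [derivative_mul, derivative_X_sub_C, one_mul]
    simp only [eval_add, eval_mul, eval_sub, eval_X, eval_C, sub_self, zero_mul,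
      mul_zero, add_zero, zero_add, eval_multiset_prod, Multiset.map_map]
    exact congrArg (fun z => (ζ₁ - ζ₂) * z)
      (congrArg Multiset.prod (Multiset.map_congr rfl (fun a _ => by simp)))
  have hup : ‖(derivative p).eval ζ₁‖ ≤ L * (4 * ρ) ^ e := by
    rw [hderiv_eq, norm_mul, ← hLdef]
    have habs_prod : ‖(((q.roots.erase ζ₁).erase ζ₂).map
        fun a => (ζ₁ - a)).prod‖ ≤ (4 * ρ) ^ e := by
      rw [show ‖(((q.roots.erase ζ₁).erase ζ₂).map fun a => (ζ₁ - a)).prod‖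
          = (((q.roots.erase ζ₁).erase ζ₂).map fun a => ‖ζ₁ - a‖).prod from
        (Multiset.prod_hom' _ (normHom : ℂ →*₀ ℝ) _).symm]
      have hh := aux_prod_le_pow (4 * ρ)
        (((q.roots.erase ζ₁).erase ζ₂).map fun a => ‖ζ₁ - a‖)
        (by
          intro x hx
          obtain ⟨a, ha, rfl⟩ := Multiset.mem_map.mp hx
          exact norm_nonneg _)
        (by
          intro x hx
          obtain ⟨a, ha, rfl⟩ := Multiset.mem_map.mp hx
          have haq : a ∈ q.roots :=
            Multiset.mem_of_mem_erase (Multiset.mem_of_mem_erase ha)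
          have ha2 : ‖a‖ < 2 * ρ := hroots a (hqroot_eval a haq)
          have hz12 : ‖ζ₁‖ < 2 * ρ := hroots ζ₁ h1
          have htri : ‖ζ₁ - a‖ ≤ ‖ζ₁‖ + ‖a‖ := by
            simpa using norm_sub_le ζ₁ a
          linarith)
      rwa [Multiset.card_map, htcard] at hh
    have hL0 : 0 ≤ L := hLdef ▸ norm_nonneg _
    exact mul_le_mul_of_nonneg_left habs_prod hL0
  -- mean value estimate
  have h2ρ : (0 : ℝ) < 2 * ρ := by linarith
  have hmv : L ≤ (2 * ρ) * ‖w₁ - w₂‖ := by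
    have hconv : Convex ℝ {z : ℂ | z.re < Real.log (2 * ρ)} :=
      convex_halfSpace_re_lt _
    have hbound : ∀ x ∈ {z : ℂ | z.re < Real.log (2 * ρ)},
        ‖ContinuousLinearMap.smulRight (1 : ℂ →L[ℂ] ℂ) (Complex.exp x)‖ ≤ 2 * ρ := by
      intro x hx
      rw [ContinuousLinearMap.norm_smulRight_apply]
      have h1n : ‖(1 : ℂ →L[ℂ] ℂ)‖ = 1 := by
        rw [ContinuousLinearMap.one_def, ContinuousLinearMap.norm_id]
      rw [h1n, one_mul, Complex.norm_exp]
      have : Real.exp x.re < Real.exp (Real.log (2 * ρ)) := Real.exp_lt_exp.mpr hx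
      rw [Real.exp_log h2ρ] at this
      exact this.le
    have hmem1 : w₁ ∈ {z : ℂ | z.re < Real.log (2 * ρ)} := hr1
    have hmem2 : w₂ ∈ {z : ℂ | z.re < Real.log (2 * ρ)} := hr2
    have := hconv.norm_image_sub_le_of_norm_hasFDerivWithin_le
      (f' := fun x => ContinuousLinearMap.smulRight (1 : ℂ →L[ℂ] ℂ) (Complex.exp x))
      (fun x _ => (Complex.hasDerivAt_exp x).hasFDerivAt.hasFDerivWithinAt)
      hbound hmem2 hmem1
    simpa [hLdef, hζ₁, hζ₂] using this
  -- key numeric inequality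
  set m := e ^ 4 + 8 * e ^ 3 + 23 * e ^ 2 + 28 * e + 13 with hm
  have hcore : 2 * (4 : ℝ) ^ e * ε ^ ((e + 2) ^ 4) < ε ^ (e + 1) * ρ ^ m := by
    have hεle : ε ^ ((e + 2) ^ 4) ≤ ε ^ (e + 1) := by
      apply pow_le_pow_of_le_one hε0.le hε1.le
      calc e + 1 ≤ e + 2 := by omega
        _ ≤ (e + 2) ^ 4 := Nat.le_self_pow (by norm_num) _
    have hρm : 2 * (4 : ℝ) ^ e < ρ ^ m := by
      have h44 : (4 : ℝ) ^ (e + 4) = 4 ^ e * 256 := by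
        rw [pow_add]; norm_num
      have h4pos : (0 : ℝ) < 4 ^ e := by positivity
      have hm1 : ρ ≤ ρ ^ m := le_self_pow₀ hρ1 (by
        have : 1 ≤ 13 := by norm_num
        omega)
      nlinarith
    calc 2 * (4 : ℝ) ^ e * ε ^ ((e + 2) ^ 4) ≤ 2 * (4 : ℝ) ^ e * ε ^ (e + 1) := by
          apply mul_le_mul_of_nonneg_left hεle (by positivity)
      _ < ρ ^ m * ε ^ (e + 1) := by
          apply mul_lt_mul_of_pos_right hρm (by positivity)
      _ = ε ^ (e + 1) * ρ ^ m := by ring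
  have hkey : (ε / ρ) ^ ((e + 2) ^ 4) * ((2 * ρ) * (4 * ρ) ^ e) <
      (ε / ρ ^ (e + 2)) ^ (e + 1) := by
    rw [div_pow, div_pow, div_mul_eq_mul_div, div_lt_div_iff₀ (by positivity) (by positivity)]
    have hLHS : ε ^ ((e + 2) ^ 4) * ((2 * ρ) * (4 * ρ) ^ e) * (ρ ^ (e + 2)) ^ (e + 1) =
        (2 * 4 ^ e * ε ^ ((e + 2) ^ 4)) * ρ ^ (e ^ 2 + 4 * e + 3) := by
      rw [mul_pow, ← pow_mul,
        show e ^ 2 + 4 * e + 3 = (1 + e) + (e + 2) * (e + 1) by ring,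
        pow_add, pow_add, pow_one]
      ring
    have hRHS : ε ^ (e + 1) * ρ ^ ((e + 2) ^ 4) =
        (ε ^ (e + 1) * ρ ^ m) * ρ ^ (e ^ 2 + 4 * e + 3) := by
      rw [mul_assoc, ← pow_add]
      congr 2
      rw [hm]; ring
    rw [hLHS, hRHS]
    exact mul_lt_mul_of_pos_right hcore (by positivity)
  -- assemble
  have hfinal : (ε / ρ) ^ ((e + 2) ^ 4) * ((2 * ρ) * (4 * ρ) ^ e) <
      ‖w₁ - w₂‖ * ((2 * ρ) * (4 * ρ) ^ e) := by
    calc (ε / ρ) ^ ((e + 2) ^ 4) * ((2 * ρ) * (4 * ρ) ^ e)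
        < (ε / ρ ^ (e + 2)) ^ (e + 1) := hkey
      _ ≤ ‖(derivative p).eval ζ₁‖ := hlow
      _ ≤ L * (4 * ρ) ^ e := hup
      _ ≤ ((2 * ρ) * ‖w₁ - w₂‖) * (4 * ρ) ^ e := by
          apply mul_le_mul_of_nonneg_right hmv (by positivity)
      _ = ‖w₁ - w₂‖ * ((2 * ρ) * (4 * ρ) ^ e) := by ring
  exact lt_of_mul_lt_mul_right hfinal (by positivity)
end
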